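/- Let s̃ be the greedy schedule: s̃_i(0) = 0 and, for each t = 1,…,T, the vector (s̃_i(t))_{i=1}^N minimizes ∑_{i=1}^N [f_{i,t}(x_i) + β_i·max(x_i − s̃_i(t−1), 0)] over the set {x ∈ ℝ^N : x_i ≥ 0 for all i, ∑_{i=1}^N x_i ≥ D(t)}. Then for every feasible schedule s, the total cost of s̃ is at most (1 + β/e₀) times the total cost of s, where β = max_i β_i and e₀ = min_i e_{0,i}. -/

import Mathlib

/-- Theorem 1 (greedy / AFHC without look-ahead): the greedy schedule is
`(1 + β/e₀)`-competitive, where `β = max_i β_i` and `e₀ = min_i e_{0,i}`. -/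
theorem greedy_competitive
    (N T : ℕ) (hN : 1 ≤ N) (hT : 1 ≤ T)
    (f : Fin N → ℕ → ℝ → ℝ)
    (hconv : ∀ i t, ConvexOn ℝ Set.univ (f i t))
    (hmono : ∀ i t, Monotone (f i t))
    (e0i : Fin N → ℝ) (he0i : ∀ i, 0 < e0i i)
    (hflb : ∀ i t x, 0 ≤ x → e0i i * x ≤ f i t x)
    (β : Fin N → ℝ) (hβ : ∀ i, 0 ≤ β i)
    (D : ℕ → ℝ) (hD : ∀ t, 0 ≤ D t)
    (βmax : ℝ) (hβmax : IsGreatest (Set.range β) βmax)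
    (e0 : ℝ) (he0 : IsLeast (Set.range e0i) e0)
    -- the greedy schedule s̃
    (st : Fin N → ℕ → ℝ)
    (hst0 : ∀ i, st i 0 = 0)
    (hgreedy : ∀ t ∈ Finset.Icc 1 T,
      (∀ i, 0 ≤ st i t) ∧ D t ≤ ∑ i, st i t ∧
      ∀ x : Fin N → ℝ, (∀ i, 0 ≤ x i) → D t ≤ ∑ i, x i →
        ∑ i, (f i t (st i t) + β i * max (st i t - st i (t - 1)) 0) ≤
          ∑ i, (f i t (x i) + β i * max (x i - st i (t - 1)) 0)) :
    -- for every feasible schedule s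
    ∀ s : Fin N → ℕ → ℝ,
      (∀ i, s i 0 = 0) →
      (∀ i, ∀ t ∈ Finset.Icc 1 T, 0 ≤ s i t) →
      (∀ t ∈ Finset.Icc 1 T, D t ≤ ∑ i, s i t) →
      ∑ t ∈ Finset.Icc 1 T, ∑ i,
          (f i t (st i t) + β i * max (st i t - st i (t - 1)) 0) ≤
        (1 + βmax / e0) *
          ∑ t ∈ Finset.Icc 1 T, ∑ i,
            (f i t (s i t) + β i * max (s i t - s i (t - 1)) 0) := by
  intro s hs0 hsnn hsfeas
  have he0pos : 0 < e0 := by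
    obtain ⟨j, hj⟩ := he0.1; rw [← hj]; exact he0i j
  have hβnn : 0 ≤ βmax := by
    obtain ⟨j, hj⟩ := hβmax.1; rw [← hj]; exact hβ j
  have hq : 0 ≤ βmax / e0 := div_nonneg hβnn he0pos.le
  rw [Finset.mul_sum]
  apply Finset.sum_le_sum
  intro t ht
  obtain ⟨hnn, hfeas, hopt⟩ := hgreedy t ht
  have hst_nn : ∀ i, 0 ≤ st i (t - 1) := by
    intro i
    rcases Nat.eq_zero_or_pos (t - 1) with h | h
    · rw [h, hst0]
    · exact (hgreedy (t - 1) (Finset.mem_Icc.mpr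
        ⟨h, le_trans (Nat.sub_le t 1) (Finset.mem_Icc.mp ht).2⟩)).1 i
  have hs_nn : ∀ i, 0 ≤ s i t := fun i => hsnn i t ht
  have hf_nn : ∀ i, 0 ≤ f i t (s i t) := fun i =>
    le_trans (mul_nonneg (he0i i).le (hs_nn i)) (hflb i t _ (hs_nn i))
  calc ∑ i, (f i t (st i t) + β i * max (st i t - st i (t - 1)) 0)
      ≤ ∑ i, (f i t (s i t) + β i * max (s i t - st i (t - 1)) 0) :=
        hopt _ hs_nn (hsfeas t ht)
    _ ≤ ∑ i, (f i t (s i t) + βmax / e0 * f i t (s i t)) := by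
        apply Finset.sum_le_sum
        intro i _
        apply add_le_add le_rfl
        have h1 : max (s i t - st i (t - 1)) 0 ≤ s i t := by
          apply max_le _ (hs_nn i)
          linarith [hst_nn i]
        have h2 : β i * max (s i t - st i (t - 1)) 0 ≤ βmax * s i t := by
          apply mul_le_mul (hβmax.2 ⟨i, rfl⟩) h1 (le_max_right _ _) hβnn
        have h3 : βmax * s i t ≤ βmax / e0 * (e0i i * s i t) := by
          rw [div_mul_eq_mul_div, le_div_iff₀ he0pos]
          nlinarith [mul_nonneg (mul_nonneg hβnn (hs_nn i))
            (sub_nonneg.mpr (he0.2 ⟨i, rfl⟩))]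
        have h4 : βmax / e0 * (e0i i * s i t) ≤ βmax / e0 * f i t (s i t) :=
          mul_le_mul_of_nonneg_left (hflb i t _ (hs_nn i)) hq
        linarith
    _ = (1 + βmax / e0) * ∑ i, f i t (s i t) := by
        rw [Finset.mul_sum]; apply Finset.sum_congr rfl; intro i _; ring
    _ ≤ (1 + βmax / e0) * ∑ i, (f i t (s i t) + β i * max (s i t - s i (t - 1)) 0) := by
        apply mul_le_mul_of_nonneg_left _ (by linarith)
        apply Finset.sum_le_sum
        intro i _
        have := mul_nonneg (hβ i) (le_max_right (s i t - s i (t - 1)) 0)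
        linarith
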